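/- Let λ₁, …, λₙ be a basis of Λ and λ₁*, …, λₙ* the dual basis of Λ*, and set e_i := ι(λ_i, 0)·ι(0, λ_i*) ∈ Cl for i = 1, …, n. Then: (i) the elements e₁, …, eₙ are idempotents of Cl which commute pairwise; (ii) for every left Cl-module S, the subspace of S annihilated by Λ equals the image of the product idempotent: {v ∈ S : ι(λ, 0)·v = 0 for all λ ∈ Λ} = (e₁·e₂⋯eₙ)·S. -/

import Mathlib

noncomputable section

variable (k : Type*) [Field k] (Λ : Type*) [AddCommGroup Λ] [Module k Λ]

/-- The hyperbolic quadratic form `Q (x, φ) = φ x` on `H = Λ × Λ*`. -/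
def hypQ : QuadraticForm k (Λ × Module.Dual k Λ) :=
  (QuadraticForm.dualProd k Λ).comp (LinearEquiv.prodComm k Λ (Module.Dual k Λ)).toLinearMap

lemma polar_hypQ (x y : Λ) (φ ψ : Module.Dual k Λ) :
    QuadraticMap.polar (⇑(hypQ k Λ)) (x, φ) (y, ψ) = φ y + ψ x := by
  simp [QuadraticMap.polar, hypQ]
  ring

lemma smul_prod_fix {R S : Type*} [Ring R] [AddCommGroup S] [Module R S]
    (v : S) (l : List R) (h : ∀ x ∈ l, x • v = v) : l.prod • v = v := by
  induction l with
  | nil => simp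
  | cons x t ih =>
    rw [List.prod_cons, mul_smul, ih (fun y hy => h y (List.mem_cons_of_mem x hy)),
      h x List.mem_cons_self]

/-- For a basis `λ₁,…,λₙ` of `Λ` with dual basis `λ₁*,…,λₙ*`, the
elements `e_i := ι(λ_i,0)·ι(0,λ_i*)` are pairwise commuting idempotents of `Cl`, and for
every left `Cl`-module `S` the subspace of `S` annihilated by `Λ` is the image of the
product idempotent `e₁·e₂⋯eₙ`. -/
theorem annihilator_eq_image_of_product_idempotent
    (n : ℕ) (b : Module.Basis (Fin n) k Λ)
    (e : Fin n → CliffordAlgebra (hypQ k Λ))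
    (he : e = fun i => CliffordAlgebra.ι (hypQ k Λ) (b i, 0)
      * CliffordAlgebra.ι (hypQ k Λ) (0, b.coord i))
    (S : Type*) [AddCommGroup S] [Module (CliffordAlgebra (hypQ k Λ)) S] :
    -- (i) the `e_i` are pairwise commuting idempotents
    (∀ i : Fin n, e i * e i = e i)
    ∧ (∀ i j : Fin n, e i * e j = e j * e i)
    -- (ii) the subspace annihilated by `Λ` is the image of `e₁·e₂⋯eₙ`
    ∧ {v : S | ∀ l : Λ, CliffordAlgebra.ι (hypQ k Λ) (l, 0) • v = 0}
      = {v : S | ∃ w : S, v = (List.ofFn e).prod • w} := by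
  set ι := CliffordAlgebra.ι (hypQ k Λ) with hι
  set a : Fin n → CliffordAlgebra (hypQ k Λ) := fun i => ι (b i, 0) with ha
  set c : Fin n → CliffordAlgebra (hypQ k Λ) := fun i => ι (0, b.coord i) with hc
  have hee : ∀ i, e i = a i * c i := fun i => by rw [he]
  -- basic anticommutation relations
  have haa : ∀ i j, a i * a j = -(a j * a i) := by
    intro i j
    have h := CliffordAlgebra.ι_mul_ι_add_swap (Q := hypQ k Λ) (b i, 0) (b j, 0)
    rw [polar_hypQ] at h
    simp only [LinearMap.zero_apply, add_zero, map_zero] at h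
    exact eq_neg_of_add_eq_zero_left h
  have hcc : ∀ i j, c i * c j = -(c j * c i) := by
    intro i j
    have h := CliffordAlgebra.ι_mul_ι_add_swap (Q := hypQ k Λ) (0, b.coord i) (0, b.coord j)
    rw [polar_hypQ] at h
    simp only [map_zero, add_zero] at h
    exact eq_neg_of_add_eq_zero_left h
  have hac : ∀ i j, i ≠ j → a i * c j = -(c j * a i) := by
    intro i j hij
    have h := CliffordAlgebra.ι_mul_ι_add_swap (Q := hypQ k Λ) (b i, 0) (0, b.coord j)
    rw [polar_hypQ] at h
    simp only [LinearMap.zero_apply, map_zero, zero_add] at h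
    rw [Module.Basis.coord_apply, Module.Basis.repr_self, Finsupp.single_eq_of_ne' hij, map_zero] at h
    exact eq_neg_of_add_eq_zero_left h
  have hca : ∀ i, c i * a i = 1 - a i * c i := by
    intro i
    have h := CliffordAlgebra.ι_mul_ι_add_swap (Q := hypQ k Λ) (b i, 0) (0, b.coord i)
    rw [polar_hypQ] at h
    simp only [LinearMap.zero_apply, map_zero, zero_add] at h
    rw [Module.Basis.coord_apply, Module.Basis.repr_self, Finsupp.single_eq_same, map_one] at h
    rw [eq_sub_iff_add_eq, add_comm]
    exact h
  have ha0 : ∀ i, a i * a i = 0 := by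
    intro i
    have h := CliffordAlgebra.ι_sq_scalar (hypQ k Λ) (b i, 0)
    have h2 : hypQ k Λ (b i, 0) = 0 := rfl
    rw [h2, map_zero] at h
    exact h
  have hc0 : ∀ i, c i * c i = 0 := by
    intro i
    have h := CliffordAlgebra.ι_sq_scalar (hypQ k Λ) ((0 : Λ), b.coord i)
    have h2 : hypQ k Λ ((0 : Λ), b.coord i) = 0 := by
      show b.coord i 0 = 0
      simp
    rw [h2, map_zero] at h
    exact h
  -- a i and c i commute with e j for i ≠ j
  have haE : ∀ i j, i ≠ j → a i * e j = e j * a i := by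
    intro i j hij
    rw [hee, ← mul_assoc, haa, neg_mul, mul_assoc, hac i j hij, mul_neg, neg_neg, ← mul_assoc]
  have hcE : ∀ i j, i ≠ j → c i * e j = e j * c i := by
    intro i j hij
    have h1 : c i * a j = -(a j * c i) := by rw [hac j i (Ne.symm hij), neg_neg]
    rw [hee, ← mul_assoc, h1, neg_mul, mul_assoc, hcc i j, mul_neg, neg_neg, ← mul_assoc]
  -- (i) idempotency
  have hidem : ∀ i, e i * e i = e i := by
    intro i
    rw [hee, mul_assoc, ← mul_assoc (c i), hca, sub_mul, one_mul, mul_assoc (a i) (c i), hc0,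
      mul_zero, sub_zero]
  -- (i) commuting
  have hcomm : ∀ i j, e i * e j = e j * e i := by
    intro i j
    by_cases hij : i = j
    · rw [hij]
    · calc e i * e j = a i * (c i * e j) := by rw [hee i, mul_assoc]
        _ = a i * (e j * c i) := by rw [hcE i j hij]
        _ = (a i * e j) * c i := by rw [mul_assoc]
        _ = e j * a i * c i := by rw [haE i j hij]
        _ = e j * e i := by rw [mul_assoc, ← hee]
  -- a i kills the product from the left
  have haP' : ∀ (i : Fin n) (L : List (Fin n)), i ∈ L → a i * (L.map e).prod = 0 := by
    intro i L
    induction L with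
    | nil => intro h; simp at h
    | cons j t ih =>
      intro hiL
      rw [List.map_cons, List.prod_cons, ← mul_assoc]
      by_cases hj : i = j
      · subst hj
        rw [hee, ← mul_assoc, ha0, zero_mul, zero_mul]
      · have hit : i ∈ t := by
          rcases List.mem_cons.1 hiL with h | h
          · exact absurd h hj
          · exact h
        rw [haE i j hj, mul_assoc, ih hit, mul_zero]
  have haP : ∀ i, a i * (List.ofFn e).prod = 0 := by
    intro i
    rw [List.ofFn_eq_map]
    exact haP' i _ (List.mem_finRange i)
  refine ⟨hidem, hcomm, ?_⟩
  ext v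
  simp only [Set.mem_setOf_eq]
  constructor
  · intro hv
    refine ⟨v, ?_⟩
    symm
    apply smul_prod_fix
    intro x hx
    obtain ⟨i, rfl⟩ := List.mem_ofFn.1 hx
    have h1 : a i * c i = 1 - c i * a i := by rw [hca, sub_sub_cancel]
    rw [hee, h1, sub_smul, one_smul, mul_smul, show a i • v = 0 from hv (b i), smul_zero,
      sub_zero]
  · rintro ⟨w, rfl⟩
    intro l
    have hsum : ((l, (0 : Module.Dual k Λ)) : Λ × Module.Dual k Λ)
        = ∑ i, b.repr l i • ((b i, 0) : Λ × Module.Dual k Λ) := by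
      rw [Prod.ext_iff]
      constructor
      · rw [Prod.fst_sum]
        simpa using (b.sum_repr l).symm
      · rw [Prod.snd_sum]
        simp
    have h1 : ι (l, 0) = ∑ i, b.repr l i • a i := by
      rw [hsum, map_sum]
      refine Finset.sum_congr rfl fun x _ => ?_
      rw [← map_smul, Prod.smul_mk, smul_zero]
    rw [h1, Finset.sum_smul]
    apply Finset.sum_eq_zero
    intro i _
    rw [Algebra.smul_def, mul_smul, ← mul_smul (a i), haP i, zero_smul, smul_zero]

end
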